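/- Let G be a finite tree with edge costs c_e ≥ 0, let C be a finite set of clients where client c has terminals s_c ≠ t_c and activation probability p_c ∈ [0,1], and let P_c denote the edge set of the unique s_c–t_c path in G. For every feasible fractional solution to (LP-MC) on G—nonnegative reals (x^e)_{e∈E} and (x̄^e_c)_{c∈C,e∈E} with ∑_{e∈P_c}(x^e + x̄^e_c) ≥ 1 for every c ∈ C—there exists an integral feasible solution (z^e, z̄^e_c) with values in {0,1} and ∑_{e∈P_c}(z^e + z̄^e_c) ≥ 1 for every c ∈ C, such that ∑_{e∈E} c_e·z^e + ∑_{e∈E} c_e ∑_{c∈C} p_c·z̄^e_c ≤ 3·( ∑_{e∈E} c_e·x^e + ∑_{e∈E} c_e ∑_{c∈C} p_c·x̄^e_c ). -/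
import Mathlib


open Finset

open SimpleGraph MeasureTheory intervalIntegral

set_option linter.unusedSectionVars false

namespace Stmt16Aux

variable {V : Type*} [DecidableEq V] {G : SimpleGraph V}

noncomputable def pth (hT : G.IsTree) (r v : V) : G.Walk r v :=
  (hT.existsUnique_path r v).choose

lemma pth_isPath (hT : G.IsTree) (r v : V) : (pth hT r v).IsPath :=
  (hT.existsUnique_path r v).choose_spec.1

lemma pth_unique (hT : G.IsTree) {r v : V} (q : G.Walk r v) (hq : q.IsPath) :
    q = pth hT r v :=
  (hT.existsUnique_path r v).choose_spec.2 q hq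

noncomputable def dd (hT : G.IsTree) (x : Sym2 V → ℝ) (r v : V) : ℝ :=
  ((pth hT r v).edges.map x).sum

def Down (hT : G.IsTree) (r u v : V) : Prop :=
  ∃ h : G.Adj u v, pth hT r v = (pth hT r u).concat h

lemma Down.dd_eq {hT : G.IsTree} (x : Sym2 V → ℝ) {r u v : V} (h : Down hT r u v) :
    dd hT x r v = dd hT x r u + x s(u, v) := by
  obtain ⟨ha, he⟩ := h
  unfold dd
  rw [he, SimpleGraph.Walk.edges_concat]
  simp

lemma concat_isPath {a b c : V} (p : G.Walk a b) (h : G.Adj b c) (hp : p.IsPath)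
    (hc : c ∉ p.support) : (p.concat h).IsPath := by
  rw [← SimpleGraph.Walk.isPath_reverse_iff, SimpleGraph.Walk.reverse_concat]
  exact hp.reverse.cons (by simpa using hc)

lemma down_or_down (hT : G.IsTree) (r : V) {u v : V} (h : G.Adj u v) :
    Down hT r u v ∨ Down hT r v u := by
  by_cases hv : v ∈ (pth hT r u).support
  · right
    have hne : u ≠ v := h.ne
    set q1 := (pth hT r u).takeUntil v hv with hq1
    have hq1p : q1.IsPath := (pth_isPath hT r u).takeUntil hv
    have hu : u ∉ q1.support := by
      intro hmem
      have hspec := (pth hT r u).take_spec hv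
      have hnd : (pth hT r u).support.Nodup := (pth_isPath hT r u).support_nodup
      rw [← hspec, SimpleGraph.Walk.support_append] at hnd
      have hu2 : u ∈ ((pth hT r u).dropUntil v hv).support.tail := by
        have h1 : u ∈ ((pth hT r u).dropUntil v hv).support :=
          SimpleGraph.Walk.end_mem_support _
        rw [SimpleGraph.Walk.support_eq_cons] at h1
        rcases List.mem_cons.mp h1 with h1 | h1
        · exact absurd h1 hne
        · exact h1
      exact (List.disjoint_of_nodup_append hnd) hmem hu2
    have hpath : (q1.concat h.symm).IsPath := concat_isPath q1 h.symm hq1p hu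
    refine ⟨h.symm, ?_⟩
    rw [← pth_unique hT q1 hq1p, ← pth_unique hT _ hpath]
  · left
    refine ⟨h, ?_⟩
    exact (pth_unique hT _ (concat_isPath _ h (pth_isPath hT r u) hv)).symm


lemma desc (hT : G.IsTree) (x : Sym2 V → ℝ) (r : V) :
    ∀ {u b : V} (q : G.Walk u b) {a : V} (h : G.Adj a u), Down hT r a u →
      (SimpleGraph.Walk.cons h q).IsPath →
      dd hT x r b = dd hT x r u + (q.edges.map x).sum := by
  intro u b q
  induction q with
  | nil => intro a h _ _; simp
  | @cons u u' b h' q'' ih =>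
    intro a h hd hp
    have hp' : (SimpleGraph.Walk.cons h' q'').IsPath := hp.of_cons
    rcases down_or_down hT r h' with hdu | hdu
    · have hrec := ih h' hdu hp'
      rw [hrec, hdu.dd_eq x]
      simp only [SimpleGraph.Walk.edges_cons, List.map_cons, List.sum_cons]
      ring
    · exfalso
      obtain ⟨h1, he1⟩ := hd
      obtain ⟨h2, he2⟩ := hdu
      have := he1.symm.trans he2
      obtain ⟨hv, -⟩ := SimpleGraph.Walk.concat_inj this
      have hnd := hp.support_nodup
      rw [SimpleGraph.Walk.support_cons] at hnd
      have : a ∉ (SimpleGraph.Walk.cons h' q'').support := (List.nodup_cons.mp hnd).1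
      rw [SimpleGraph.Walk.support_cons] at this
      exact this (by rw [hv]; exact List.mem_cons_of_mem _ (SimpleGraph.Walk.start_mem_support q''))

lemma key (hT : G.IsTree) (x : Sym2 V → ℝ) (r : V) :
    ∀ {a b : V} (q : G.Walk a b), q.IsPath →
      ∃ m ∈ q.support, (q.edges.map x).sum ≤
        (dd hT x r a - dd hT x r m) + (dd hT x r b - dd hT x r m) := by
  intro a b q
  induction q with
  | nil => exact fun _ => ⟨_, SimpleGraph.Walk.start_mem_support _, by simp⟩
  | @cons a u b h q' ih =>
    intro hp
    rcases down_or_down hT r h with hdu | hdu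
    · -- step away from root: a is parent direction? Down a u : pth u = pth a concat
      have hall := desc hT x r q' h hdu hp
      have hstep : dd hT x r u = dd hT x r a + x s(a, u) := hdu.dd_eq x
      refine ⟨a, SimpleGraph.Walk.start_mem_support _, ?_⟩
      simp only [SimpleGraph.Walk.edges_cons, List.map_cons, List.sum_cons]
      rw [hall, hstep]; ring_nf; simp [le_refl]
    · -- Down u a : step toward root, d a = d u + x e
      obtain ⟨m, hm, hkey⟩ := ih hp.of_cons
      have hstep : dd hT x r a = dd hT x r u + x s(u, a) := hdu.dd_eq x
      refine ⟨m, ?_, ?_⟩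
      · rw [SimpleGraph.Walk.support_cons]; exact List.mem_cons_of_mem _ hm
      · simp only [SimpleGraph.Walk.edges_cons, List.map_cons, List.sum_cons]
        have : s(a, u) = s(u, a) := Sym2.eq_swap
        rw [this, hstep]
        linarith


noncomputable def dmin (hT : G.IsTree) (x : Sym2 V → ℝ) (r : V) : Sym2 V → ℝ :=
  Sym2.lift ⟨fun u v => min (dd hT x r u) (dd hT x r v), fun _ _ => min_comm _ _⟩

noncomputable def dmax (hT : G.IsTree) (x : Sym2 V → ℝ) (r : V) : Sym2 V → ℝ :=
  Sym2.lift ⟨fun u v => max (dd hT x r u) (dd hT x r v), fun _ _ => max_comm _ _⟩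

@[simp] lemma dmin_mk (hT : G.IsTree) (x : Sym2 V → ℝ) (r u v : V) :
    dmin hT x r s(u, v) = min (dd hT x r u) (dd hT x r v) := rfl

@[simp] lemma dmax_mk (hT : G.IsTree) (x : Sym2 V → ℝ) (r u v : V) :
    dmax hT x r s(u, v) = max (dd hT x r u) (dd hT x r v) := rfl

lemma dmin_le_dmax (hT : G.IsTree) (x : Sym2 V → ℝ) (r : V) (e : Sym2 V) :
    dmin hT x r e ≤ dmax hT x r e := by
  induction e using Sym2.ind with
  | _ u v => exact le_trans (min_le_left _ _) (le_max_left _ _)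

lemma hit (hT : G.IsTree) (x : Sym2 V → ℝ) (r : V) :
    ∀ {a b : V} (q : G.Walk a b) (g : ℝ),
      min (dd hT x r a) (dd hT x r b) < g → g ≤ max (dd hT x r a) (dd hT x r b) →
      ∃ e ∈ q.edges, dmin hT x r e < g ∧ g ≤ dmax hT x r e := by
  intro a b q
  induction q with
  | nil => intro g h1 h2; simp only [min_self, max_self] at h1 h2; linarith
  | @cons a u b h q' ih =>
    intro g h1 h2
    by_cases hcut : min (dd hT x r a) (dd hT x r u) < g ∧ g ≤ max (dd hT x r a) (dd hT x r u)
    · exact ⟨s(a, u), by simp [SimpleGraph.Walk.edges_cons], by simpa using hcut⟩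
    · have h1' : min (dd hT x r u) (dd hT x r b) < g ∧
          g ≤ max (dd hT x r u) (dd hT x r b) := by
        rcases not_and_or.mp hcut with hle | hgt
        · have hga : g ≤ dd hT x r a := le_trans (not_lt.mp hle) (min_le_left _ _)
          have hgu : g ≤ dd hT x r u := le_trans (not_lt.mp hle) (min_le_right _ _)
          have hb : dd hT x r b < g := by
            rcases min_lt_iff.mp h1 with h | h
            · linarith
            · exact h
          exact ⟨min_lt_iff.mpr (Or.inr hb), le_max_iff.mpr (Or.inl hgu)⟩
        · have hgt' := not_le.mp hgt
          have ha : dd hT x r a < g := lt_of_le_of_lt (le_max_left _ _) hgt'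
          have hu : dd hT x r u < g := lt_of_le_of_lt (le_max_right _ _) hgt'
          have hb : g ≤ dd hT x r b := by
            rcases le_max_iff.mp h2 with h | h
            · linarith
            · exact h
          exact ⟨min_lt_iff.mpr (Or.inl hu), le_max_iff.mpr (Or.inr hb)⟩
      obtain ⟨e, hmem, he⟩ := ih g h1'.1 h1'.2
      exact ⟨e, by simp [SimpleGraph.Walk.edges_cons, hmem], he⟩

lemma clientCut (hT : G.IsTree) (x : Sym2 V → ℝ) (r : V) {a b : V}
    (q : G.Walk a b) (hq : q.IsPath) (hm : 2/3 ≤ (q.edges.map x).sum) (θ : ℝ) :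
    ∃ e ∈ q.edges, ∃ k : ℤ,
      dmin hT x r e < θ + k/3 ∧ θ + k/3 ≤ dmax hT x r e := by
  obtain ⟨m, hmem, hkey⟩ := key hT x r q hq
  have hcases : 1/3 ≤ dd hT x r a - dd hT x r m ∨ 1/3 ≤ dd hT x r b - dd hT x r m := by
    by_contra hcon; push_neg at hcon; obtain ⟨h1, h2⟩ := hcon; linarith
  have main : ∀ (v : V), 1/3 ≤ dd hT x r v - dd hT x r m →
      ∀ {a' : V} (q' : G.Walk a' v) (hq'e : q'.edges ⊆ q.edges),
        dd hT x r a' = dd hT x r m →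
      ∃ e ∈ q.edges, ∃ k : ℤ,
        dmin hT x r e < θ + k/3 ∧ θ + k/3 ≤ dmax hT x r e := by
    intro v hv a' q' hsub hend
    set c : ℝ := dd hT x r v with hc
    set k : ℤ := ⌊3 * (c - θ)⌋ with hk
    have hg1 : θ + k/3 ≤ c := by
      have := Int.floor_le (3 * (c - θ))
      rw [← hk] at this; linarith
    have hg2 : c - 1/3 < θ + k/3 := by
      have := Int.lt_floor_add_one (3 * (c - θ))
      rw [← hk] at this; linarith
    have hgm : dd hT x r m < θ + k/3 := by linarith
    have hmin : min (dd hT x r a') (dd hT x r v) < θ + k/3 := by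
      rw [hend]; exact min_lt_iff.mpr (Or.inl hgm)
    have hmax : θ + k/3 ≤ max (dd hT x r a') (dd hT x r v) :=
      le_max_iff.mpr (Or.inr hg1)
    obtain ⟨e, hmem', he⟩ := hit hT x r q' (θ + k/3) hmin hmax
    exact ⟨e, hsub hmem', k, he⟩
  rcases hcases with hca | hcb
  · exact main a hca (q.takeUntil m hmem).reverse
      (by intro e he; rw [SimpleGraph.Walk.edges_reverse] at he;
          exact q.edges_takeUntil_subset hmem (List.mem_reverse.mp he))
      rfl
  · exact main b hcb (q.dropUntil m hmem) (q.edges_dropUntil_subset hmem) rfl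


lemma floorcomp_intervalIntegrable (c : ℝ) (a b : ℝ) :
    IntervalIntegrable (fun θ : ℝ => ((⌊3 * (c - θ)⌋ : ℤ) : ℝ)) volume a b := by
  apply AntitoneOn.intervalIntegrable
  intro θ1 _ θ2 _ h12
  simp only []
  exact_mod_cast Int.floor_le_floor (by linarith : 3 * (c - θ2) ≤ 3 * (c - θ1))

lemma fractcomp_intervalIntegrable (c : ℝ) (a b : ℝ) :
    IntervalIntegrable (fun θ : ℝ => Int.fract (3 * (c - θ))) volume a b := by
  have : (fun θ : ℝ => Int.fract (3 * (c - θ))) =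
      fun θ : ℝ => (3 * (c - θ)) - ((⌊3 * (c - θ)⌋ : ℤ) : ℝ) := by
    funext θ; rw [Int.fract]
  rw [this]
  exact ((Continuous.intervalIntegrable (by continuity) a b).sub
    (floorcomp_intervalIntegrable c a b))

lemma fract_integral_const (c : ℝ) :
    ∫ θ in (0:ℝ)..(1/3 : ℝ), Int.fract (3 * (c - θ)) =
      ∫ θ in (0:ℝ)..(1/3 : ℝ), Int.fract (3 * (0 - θ)) := by
  have key : ∀ d : ℝ, ∫ θ in (0:ℝ)..(1/3 : ℝ), Int.fract (3 * (d - θ)) =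
      (1/3) * ∫ u in (3*d - 1)..(3*d), Int.fract u := by
    intro d
    have h1 : ∀ θ : ℝ, Int.fract (3 * (d - θ)) = (fun u => Int.fract (3 * d - u)) (3 * θ) := by
      intro θ; simp only []; ring_nf
    calc ∫ θ in (0:ℝ)..(1/3 : ℝ), Int.fract (3 * (d - θ))
        = ∫ θ in (0:ℝ)..(1/3 : ℝ), (fun u => Int.fract (3 * d - u)) (3 * θ) := by
          apply intervalIntegral.integral_congr; intro θ _; exact h1 θ
      _ = (3:ℝ)⁻¹ • ∫ u in (3*(0:ℝ))..(3*(1/3:ℝ)), Int.fract (3 * d - u) := by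
          rw [intervalIntegral.integral_comp_mul_left (fun u => Int.fract (3 * d - u))
            (by norm_num : (3:ℝ) ≠ 0)]
      _ = (1/3) * ∫ u in (0:ℝ)..(1:ℝ), Int.fract (3 * d - u) := by norm_num
      _ = (1/3) * ∫ u in (3*d - 1)..(3*d - 0), Int.fract u := by
          rw [intervalIntegral.integral_comp_sub_left Int.fract (3*d)]
      _ = (1/3) * ∫ u in (3*d - 1)..(3*d), Int.fract u := by norm_num
  rw [key c, key 0]
  have hper : ∀ d : ℝ, ∫ u in (3*d - 1)..(3*d), Int.fract u =
      ∫ u in (0:ℝ)..(1:ℝ), Int.fract u := by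
    intro d
    have := (Int.fract_periodic ℝ).intervalIntegral_add_eq (3*d - 1) 0
    simpa using this
  rw [hper c, hper 0]

lemma floor_diff_integral (A B : ℝ) :
    ∫ θ in (0:ℝ)..(1/3 : ℝ),
      (((⌊3 * (B - θ)⌋ : ℤ) : ℝ) - ((⌊3 * (A - θ)⌋ : ℤ) : ℝ)) = B - A := by
  have hrw : ∀ θ : ℝ, (((⌊3 * (B - θ)⌋ : ℤ) : ℝ) - ((⌊3 * (A - θ)⌋ : ℤ) : ℝ)) =
      (3*(B - A)) - Int.fract (3 * (B - θ)) + Int.fract (3 * (A - θ)) := by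
    intro θ
    have h1 : ((⌊3 * (B - θ)⌋ : ℤ) : ℝ) = 3 * (B - θ) - Int.fract (3 * (B - θ)) := by
      rw [Int.self_sub_fract]
    have h2 : ((⌊3 * (A - θ)⌋ : ℤ) : ℝ) = 3 * (A - θ) - Int.fract (3 * (A - θ)) := by
      rw [Int.self_sub_fract]
    rw [h1, h2]; ring
  rw [intervalIntegral.integral_congr (fun θ _ => hrw θ)]
  rw [intervalIntegral.integral_add
      (((Continuous.intervalIntegrable continuous_const _ _).sub
        (fractcomp_intervalIntegrable B _ _)))
      (fractcomp_intervalIntegrable A _ _),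
    intervalIntegral.integral_sub (Continuous.intervalIntegrable continuous_const _ _)
      (fractcomp_intervalIntegrable B _ _)]
  rw [fract_integral_const A, fract_integral_const B]
  rw [intervalIntegral.integral_const]
  simp only [smul_eq_mul]
  ring

set_option maxHeartbeats 1000000 in
lemma avg {ι : Type*} (S : Finset ι) (cost A B : ι → ℝ) :
    ∃ θ : ℝ, ∑ e ∈ S, cost e * (((⌊3 * (B e - θ)⌋ : ℤ) : ℝ) - ((⌊3 * (A e - θ)⌋ : ℤ) : ℝ)) ≤
      3 * ∑ e ∈ S, cost e * (B e - A e) := by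
  by_contra hcon
  push_neg at hcon
  set F : ℝ → ℝ := fun θ => ∑ e ∈ S,
    cost e * (((⌊3 * (B e - θ)⌋ : ℤ) : ℝ) - ((⌊3 * (A e - θ)⌋ : ℤ) : ℝ)) with hF
  set M : ℝ := ∑ e ∈ S, cost e * (B e - A e) with hM
  have hint : ∀ a b : ℝ, IntervalIntegrable F volume a b := by
    intro a b
    have hFeq : F = ∑ e ∈ S, (fun θ : ℝ =>
        cost e * (((⌊3 * (B e - θ)⌋ : ℤ) : ℝ) - ((⌊3 * (A e - θ)⌋ : ℤ) : ℝ))) := by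
      funext θ
      rw [hF, Finset.sum_apply]
    rw [hFeq]
    exact IntervalIntegrable.sum S (fun e _ =>
      ((floorcomp_intervalIntegrable (B e) a b).sub
        (floorcomp_intervalIntegrable (A e) a b)).const_mul (cost e))
  have hFint : ∫ θ in (0:ℝ)..(1/3:ℝ), F θ = M := by
    rw [hF]
    rw [intervalIntegral.integral_finset_sum (fun e _ =>
      (((floorcomp_intervalIntegrable (B e) 0 (1/3)).sub
        (floorcomp_intervalIntegrable (A e) 0 (1/3))).const_mul (cost e)))]
    rw [hM]
    apply Finset.sum_congr rfl
    intro e _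
    rw [intervalIntegral.integral_const_mul, floor_diff_integral]
  have hpos : (0:ℝ) < ∫ θ in (0:ℝ)..(1/3:ℝ), (F θ - 3 * M) := by
    apply intervalIntegral.intervalIntegral_pos_of_pos_on
    · exact (hint 0 (1/3)).sub (Continuous.intervalIntegrable continuous_const _ _)
    · intro θ _; have := hcon θ; linarith
    · norm_num
  rw [intervalIntegral.integral_sub (hint 0 (1/3))
      (Continuous.intervalIntegrable continuous_const _ _), hFint,
    intervalIntegral.integral_const] at hpos
  simp only [smul_eq_mul] at hpos
  nlinarith [hpos]


lemma edge_gap (hT : G.IsTree) (x : Sym2 V → ℝ) (hx : ∀ e, 0 ≤ x e) (r : V) :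
    ∀ e ∈ G.edgeSet, dmax hT x r e - dmin hT x r e = x e := by
  intro e
  induction e using Sym2.ind with
  | _ u v =>
    intro he
    have hadj : G.Adj u v := G.mem_edgeSet.mp he
    rcases down_or_down hT r hadj with hd | hd
    · have hdd : dd hT x r v = dd hT x r u + x s(u, v) := hd.dd_eq x
      rw [dmax_mk, dmin_mk, max_eq_right (by linarith [hx s(u, v)] : dd hT x r u ≤ dd hT x r v),
        min_eq_left (by linarith [hx s(u, v)] : dd hT x r u ≤ dd hT x r v)]
      linarith
    · have hdd : dd hT x r u = dd hT x r v + x s(v, u) := hd.dd_eq x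
      have hsw : s(v, u) = s(u, v) := Sym2.eq_swap
      rw [hsw] at hdd
      rw [dmax_mk, dmin_mk, max_eq_left (by linarith [hx s(u, v)] : dd hT x r v ≤ dd hT x r u),
        min_eq_right (by linarith [hx s(u, v)] : dd hT x r v ≤ dd hT x r u)]
      linarith

end Stmt16Aux

open Stmt16Aux

/-- Rounding the rent-or-buy LP (LP-MC) for universal stochastic multicut on a tree `G`
to an integral solution losing at most a factor 3. For each client `c` with terminals
`s c ≠ t c`, `w c` is the (unique, since `G` is a tree) `s c`–`t c` path, and `P_c` is
its edge set `(w c).edges.toFinset`. -/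
theorem stmt16 {V : Type*} [Fintype V] [DecidableEq V]
    (G : SimpleGraph V) [DecidableRel G.Adj] (hT : G.IsTree)
    (cost : Sym2 V → ℝ) (hcost : ∀ e, 0 ≤ cost e)
    {C : Type*} [Fintype C]
    (s t : C → V) (hst : ∀ c, s c ≠ t c)
    (p : C → ℝ) (hp0 : ∀ c, 0 ≤ p c) (hp1 : ∀ c, p c ≤ 1)
    (w : ∀ c : C, G.Walk (s c) (t c)) (hw : ∀ c, (w c).IsPath)
    (x : Sym2 V → ℝ) (xb : C → Sym2 V → ℝ)
    (hx : ∀ e, 0 ≤ x e) (hxb : ∀ c e, 0 ≤ xb c e)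
    (hfeas : ∀ c : C, 1 ≤ ∑ e ∈ (w c).edges.toFinset, (x e + xb c e)) :
    ∃ z : Sym2 V → ℝ, ∃ zb : C → Sym2 V → ℝ,
      (∀ e, z e = 0 ∨ z e = 1) ∧ (∀ c e, zb c e = 0 ∨ zb c e = 1) ∧
      (∀ c : C, 1 ≤ ∑ e ∈ (w c).edges.toFinset, (z e + zb c e)) ∧
      ∑ e ∈ G.edgeFinset, cost e * z e +
          ∑ e ∈ G.edgeFinset, cost e * ∑ c : C, p c * zb c e ≤
        3 * (∑ e ∈ G.edgeFinset, cost e * x e +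
          ∑ e ∈ G.edgeFinset, cost e * ∑ c : C, p c * xb c e) := by
  classical
  haveI : Nonempty V := hT.isConnected.nonempty
  set r : V := Classical.arbitrary V with hr
  -- list/finset sum conversion
  have hnodup : ∀ c, (w c).edges.Nodup := fun c =>
    SimpleGraph.Walk.edges_nodup_of_support_nodup (hw c).support_nodup
  have hconv : ∀ (c : C) (f : Sym2 V → ℝ),
      ∑ e ∈ (w c).edges.toFinset, f e = ((w c).edges.map f).sum := fun c f =>
    List.sum_toFinset f (hnodup c)
  -- path edge sets are nonempty and inside the edge finset
  have hPne : ∀ c, ((w c).edges.toFinset).Nonempty := by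
    intro c
    rw [Finset.nonempty_iff_ne_empty]
    intro hemp
    have := hfeas c
    rw [hemp] at this
    simp only [Finset.sum_empty] at this
    linarith
  have hPsub : ∀ c, (w c).edges.toFinset ⊆ G.edgeFinset := by
    intro c e he
    exact SimpleGraph.mem_edgeFinset.mpr
      ((w c).edges_subset_edgeSet (List.mem_toFinset.mp he))
  -- cheapest edge on each path
  choose emin hminmem hminle using fun c =>
    Finset.exists_min_image ((w c).edges.toFinset) cost (hPne c)
  -- good shift θ
  obtain ⟨θ, hθ⟩ := avg G.edgeFinset cost
    (fun e => dmin hT x r e) (fun e => dmax hT x r e)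
  -- the integral solutions
  set z : Sym2 V → ℝ := fun e =>
    if ∃ k : ℤ, dmin hT x r e < θ + k/3 ∧ θ + k/3 ≤ dmax hT x r e then 1 else 0 with hz
  set zb : C → Sym2 V → ℝ := fun c e =>
    if (1/3 : ℝ) ≤ ∑ e' ∈ (w c).edges.toFinset, xb c e' then
      (if e = emin c then 1 else 0) else 0 with hzb
  have hz0 : ∀ e, 0 ≤ z e := by intro e; rw [hz]; dsimp only; split <;> norm_num
  have hzb0 : ∀ c e, 0 ≤ zb c e := by
    intro c e; rw [hzb]; dsimp only; split
    · split <;> norm_num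
    · norm_num
  refine ⟨z, zb, ?_, ?_, ?_, ?_⟩
  · intro e; rw [hz]; dsimp only; split
    · right; rfl
    · left; rfl
  · intro c e; rw [hzb]; dsimp only; split
    · split
      · right; rfl
      · left; rfl
    · left; rfl
  · -- feasibility
    intro c
    by_cases hB : (1/3 : ℝ) ≤ ∑ e' ∈ (w c).edges.toFinset, xb c e'
    · have hval : (1:ℝ) ≤ z (emin c) + zb c (emin c) := by
        have : zb c (emin c) = 1 := by rw [hzb]; dsimp only; rw [if_pos hB, if_pos rfl]
        have := hz0 (emin c)
        linarith [hz0 (emin c), (by rw [hzb]; dsimp only; rw [if_pos hB, if_pos rfl] :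
          zb c (emin c) = (1:ℝ))]
      calc (1:ℝ) ≤ z (emin c) + zb c (emin c) := hval
        _ ≤ ∑ e ∈ (w c).edges.toFinset, (z e + zb c e) :=
          Finset.single_le_sum (fun e _ => add_nonneg (hz0 e) (hzb0 c e)) (hminmem c)
    · have hA : 2/3 ≤ ∑ e ∈ (w c).edges.toFinset, x e := by
        have hf := hfeas c
        rw [Finset.sum_add_distrib] at hf
        push_neg at hB
        linarith
      rw [hconv c x] at hA
      obtain ⟨e0, he0, k, hk1, hk2⟩ := clientCut hT x r (w c) (hw c) hA θ
      have hz1 : z e0 = 1 := by rw [hz]; dsimp only; rw [if_pos ⟨k, hk1, hk2⟩]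
      calc (1:ℝ) ≤ z e0 + zb c e0 := by rw [hz1]; linarith [hzb0 c e0]
        _ ≤ ∑ e ∈ (w c).edges.toFinset, (z e + zb c e) :=
          Finset.single_le_sum (fun e _ => add_nonneg (hz0 e) (hzb0 c e))
            (List.mem_toFinset.mpr he0)
  · -- cost bound
    have claim1 : ∑ e ∈ G.edgeFinset, cost e * z e ≤
        3 * ∑ e ∈ G.edgeFinset, cost e * x e := by
      have hzN : ∀ e, z e ≤
          ((⌊3 * (dmax hT x r e - θ)⌋ : ℤ) : ℝ) - ((⌊3 * (dmin hT x r e - θ)⌋ : ℤ) : ℝ) := by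
        intro e
        rw [hz]; dsimp only
        split
        · rename_i hcond
          obtain ⟨k, hk1, hk2⟩ := hcond
          have h1 : (k : ℤ) ≤ ⌊3 * (dmax hT x r e - θ)⌋ :=
            Int.le_floor.mpr (by push_cast; linarith)
          have h2 : ⌊3 * (dmin hT x r e - θ)⌋ < k :=
            Int.floor_lt.mpr (by push_cast; linarith)
          have : (1 : ℤ) ≤ ⌊3 * (dmax hT x r e - θ)⌋ - ⌊3 * (dmin hT x r e - θ)⌋ := by omega
          exact_mod_cast this
        · have hmono : ⌊3 * (dmin hT x r e - θ)⌋ ≤ ⌊3 * (dmax hT x r e - θ)⌋ :=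
            Int.floor_le_floor (by linarith [dmin_le_dmax hT x r e])
          have : (0 : ℤ) ≤ ⌊3 * (dmax hT x r e - θ)⌋ - ⌊3 * (dmin hT x r e - θ)⌋ := by omega
          exact_mod_cast this
      calc ∑ e ∈ G.edgeFinset, cost e * z e
          ≤ ∑ e ∈ G.edgeFinset, cost e *
            (((⌊3 * (dmax hT x r e - θ)⌋ : ℤ) : ℝ) - ((⌊3 * (dmin hT x r e - θ)⌋ : ℤ) : ℝ)) :=
            Finset.sum_le_sum (fun e _ => mul_le_mul_of_nonneg_left (hzN e) (hcost e))
        _ ≤ 3 * ∑ e ∈ G.edgeFinset, cost e * (dmax hT x r e - dmin hT x r e) := hθ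
        _ = 3 * ∑ e ∈ G.edgeFinset, cost e * x e := by
            congr 1
            apply Finset.sum_congr rfl
            intro e he
            rw [edge_gap hT x hx r e (SimpleGraph.mem_edgeFinset.mp he)]
    have claim2 : ∑ e ∈ G.edgeFinset, cost e * ∑ c : C, p c * zb c e ≤
        3 * ∑ e ∈ G.edgeFinset, cost e * ∑ c : C, p c * xb c e := by
      have hswap : ∀ (f : C → Sym2 V → ℝ),
          ∑ e ∈ G.edgeFinset, cost e * ∑ c : C, p c * f c e =
            ∑ c : C, ∑ e ∈ G.edgeFinset, cost e * (p c * f c e) := by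
        intro f
        have h1 : ∀ e, cost e * ∑ c : C, p c * f c e = ∑ c : C, cost e * (p c * f c e) :=
          fun e => Finset.mul_sum _ _ _
        rw [Finset.sum_congr rfl (fun e _ => h1 e), Finset.sum_comm]
      rw [hswap zb, hswap xb, Finset.mul_sum]
      apply Finset.sum_le_sum
      intro c _
      have hxbsum : ∀ e, cost e * (p c * xb c e) = p c * (cost e * xb c e) :=
        fun e => by ring
      have hRHS : 3 * ∑ e ∈ G.edgeFinset, cost e * (p c * xb c e) =
          3 * (p c * ∑ e ∈ G.edgeFinset, cost e * xb c e) := by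
        rw [Finset.sum_congr rfl (fun e _ => hxbsum e), ← Finset.mul_sum]
      rw [hRHS]
      have hxbnn : 0 ≤ ∑ e ∈ G.edgeFinset, cost e * xb c e :=
        Finset.sum_nonneg (fun e _ => mul_nonneg (hcost e) (hxb c e))
      by_cases hB : (1/3 : ℝ) ≤ ∑ e' ∈ (w c).edges.toFinset, xb c e'
      · -- renting client: bounded by 3 times its rental LP cost
        have hEF : emin c ∈ G.edgeFinset := hPsub c (hminmem c)
        have hzbeq : zb c (emin c) = 1 := by
          rw [hzb]; dsimp only; rw [if_pos hB, if_pos rfl]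
        have hsum : ∑ e ∈ G.edgeFinset, cost e * (p c * zb c e) =
            p c * cost (emin c) := by
          have hother : ∀ b ∈ G.edgeFinset, b ≠ emin c → cost b * (p c * zb c b) = 0 := by
            intro b _ hne
            rw [hzb]; dsimp only
            rw [if_pos hB, if_neg hne, mul_zero, mul_zero]
          rw [Finset.sum_eq_single (emin c) hother (fun habs => absurd hEF habs), hzbeq]
          ring
        rw [hsum]
        have t1 : cost (emin c) * (1/3) ≤
            cost (emin c) * ∑ e' ∈ (w c).edges.toFinset, xb c e' :=
          mul_le_mul_of_nonneg_left hB (hcost _)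
        have t2 : cost (emin c) * ∑ e' ∈ (w c).edges.toFinset, xb c e' =
            ∑ e' ∈ (w c).edges.toFinset, cost (emin c) * xb c e' :=
          Finset.mul_sum _ _ _
        have t3 : ∑ e' ∈ (w c).edges.toFinset, cost (emin c) * xb c e' ≤
            ∑ e' ∈ (w c).edges.toFinset, cost e' * xb c e' :=
          Finset.sum_le_sum (fun e' he' =>
            mul_le_mul_of_nonneg_right (hminle c e' he') (hxb c e'))
        have t4 : ∑ e' ∈ (w c).edges.toFinset, cost e' * xb c e' ≤
            ∑ e' ∈ G.edgeFinset, cost e' * xb c e' :=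
          Finset.sum_le_sum_of_subset_of_nonneg (hPsub c)
            (fun e' _ _ => mul_nonneg (hcost e') (hxb c e'))
        have hkey : cost (emin c) ≤ 3 * ∑ e ∈ G.edgeFinset, cost e * xb c e := by
          linarith
        calc p c * cost (emin c) ≤
            p c * (3 * ∑ e ∈ G.edgeFinset, cost e * xb c e) :=
              mul_le_mul_of_nonneg_left hkey (hp0 c)
          _ = 3 * (p c * ∑ e ∈ G.edgeFinset, cost e * xb c e) := by ring
      · -- buying client: rents nothing
        have hzero : ∑ e ∈ G.edgeFinset, cost e * (p c * zb c e) = 0 := by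
          apply Finset.sum_eq_zero
          intro e _
          rw [hzb]; dsimp only; rw [if_neg hB, mul_zero, mul_zero]
        rw [hzero]
        have := mul_nonneg (hp0 c) hxbnn
        linarith
    linarith
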